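/- Let I be an upper order ideal of the type A_n root poset, viewed as a ballot sequence/Dyck path of length 2(n+1). The number of parts of the Gerstenhaber partition λ_I equals the maximum height of the associated Dyck path. -/

import Mathlib

/-- An upper order ideal of matrix positions: `I ⊆ {(i,j) : 1 ≤ i < j ≤ n+1}` with
`(i,j) ∈ I`, `i' ≤ i`, `j ≤ j'`, `i' < j'` implying `(i',j') ∈ I`. -/
def IsMatrixIdeal (n : ℕ) (I : Finset (ℕ × ℕ)) : Prop :=
  (∀ p ∈ I, 1 ≤ p.1 ∧ p.1 < p.2 ∧ p.2 ≤ n + 1) ∧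
  (∀ p ∈ I, ∀ q : ℕ × ℕ, 1 ≤ q.1 → q.1 ≤ p.1 → p.2 ≤ q.2 → q.2 ≤ n + 1 → q ∈ I)


/-- The ad-nilpotent ideal of `gl_{n+1}(ℂ)` spanned by the elementary matrices
`t_{ij}` for `(i,j) ∈ I` (1-indexed positions). -/
noncomputable def idealSubmoduleM (n : ℕ) (I : Finset (ℕ × ℕ)) :
    Submodule ℂ (Matrix (Fin (n + 1)) (Fin (n + 1)) ℂ) :=
  Submodule.span ℂ
    {m | ∃ p ∈ I, m = Matrix.of (fun a b : Fin (n + 1) =>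
      if (a : ℕ) + 1 = p.1 ∧ (b : ℕ) + 1 = p.2 then (1 : ℂ) else 0)}

/-- Number of ones among `b 1, …, b t`. -/
def onesUpTo (b : ℕ → Bool) (t : ℕ) : ℕ :=
  ((Finset.Icc 1 t).filter (fun s => b s = true)).card

/-- Number of zeros among `b 1, …, b t`. -/
def zerosUpTo (b : ℕ → Bool) (t : ℕ) : ℕ :=
  ((Finset.Icc 1 t).filter (fun s => b s = false)).card

/-! ### Auxiliary lemmas on the path statistics -/

lemma onesUpTo_succ (b : ℕ → Bool) (t : ℕ) :
    onesUpTo b (t + 1) = onesUpTo b t + (if b (t + 1) = true then 1 else 0) := by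
  unfold onesUpTo
  have h : Finset.Icc 1 (t + 1) = insert (t + 1) (Finset.Icc 1 t) := by
    ext s
    simp [Finset.mem_Icc, Finset.mem_insert]
    omega
  rw [h, Finset.filter_insert]
  split
  · rw [Finset.card_insert_of_notMem (by simp [Finset.mem_Icc])]
  · simp

lemma zerosUpTo_succ (b : ℕ → Bool) (t : ℕ) :
    zerosUpTo b (t + 1) = zerosUpTo b t + (if b (t + 1) = false then 1 else 0) := by
  unfold zerosUpTo
  have h : Finset.Icc 1 (t + 1) = insert (t + 1) (Finset.Icc 1 t) := by
    ext s
    simp [Finset.mem_Icc, Finset.mem_insert]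
    omega
  rw [h, Finset.filter_insert]
  split
  · rw [Finset.card_insert_of_notMem (by simp [Finset.mem_Icc])]
  · simp

lemma onesUpTo_zero (b : ℕ → Bool) : onesUpTo b 0 = 0 := by
  simp [onesUpTo]

lemma zerosUpTo_zero (b : ℕ → Bool) : zerosUpTo b 0 = 0 := by
  simp [zerosUpTo]

lemma ones_add_zeros (b : ℕ → Bool) (t : ℕ) : onesUpTo b t + zerosUpTo b t = t := by
  induction t with
  | zero => simp [onesUpTo_zero, zerosUpTo_zero]
  | succ t ih =>
    rw [onesUpTo_succ, zerosUpTo_succ]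
    cases h : b (t + 1) <;> simp [h] <;> omega

lemma onesUpTo_mono (b : ℕ → Bool) {t t' : ℕ} (h : t ≤ t') :
    onesUpTo b t ≤ onesUpTo b t' :=
  Finset.card_le_card (Finset.filter_subset_filter _ (Finset.Icc_subset_Icc le_rfl h))

lemma zerosUpTo_mono (b : ℕ → Bool) {t t' : ℕ} (h : t ≤ t') :
    zerosUpTo b t ≤ zerosUpTo b t' :=
  Finset.card_le_card (Finset.filter_subset_filter _ (Finset.Icc_subset_Icc le_rfl h))

/-- Position of the `i`-th zero exists. -/
lemma exists_ith_zero {n : ℕ} (b : ℕ → Bool)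
    (hzeros : zerosUpTo b (2 * (n + 1)) = n + 1) {i : ℕ} (h1 : 1 ≤ i) (h2 : i ≤ n + 1) :
    ∃ t, 1 ≤ t ∧ t ≤ 2 * (n + 1) ∧ zerosUpTo b t = i ∧
      zerosUpTo b (t - 1) = i - 1 ∧ onesUpTo b t = onesUpTo b (t - 1) := by
  have hP : ∃ t, i ≤ zerosUpTo b t := ⟨2 * (n + 1), by rw [hzeros]; exact h2⟩
  set t := Nat.find hP with htdef
  have ht : i ≤ zerosUpTo b t := Nat.find_spec hP
  have htle : t ≤ 2 * (n + 1) := Nat.find_min' hP (by rw [hzeros]; exact h2)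
  have ht1 : 1 ≤ t := by
    rcases Nat.eq_zero_or_pos t with h0 | h
    · exfalso; rw [h0, zerosUpTo_zero] at ht; omega
    · exact h
  have hmin : ¬ i ≤ zerosUpTo b (t - 1) := Nat.find_min hP (by omega)
  have hstep0 := zerosUpTo_succ b (t - 1)
  have hstep1 := onesUpTo_succ b (t - 1)
  have ht' : t - 1 + 1 = t := by omega
  rw [ht'] at hstep0 hstep1
  cases hbt : b t with
  | true => exfalso; rw [hbt] at hstep0; simp at hstep0; omega
  | false =>
    rw [hbt] at hstep0 hstep1
    simp at hstep0 hstep1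
    exact ⟨t, ht1, htle, by omega, by omega, by omega⟩

/-! ### Auxiliary linear algebra lemmas -/

open Module Submodule Matrix

lemma rank_le_card_cols {N : ℕ} (A : Matrix (Fin N) (Fin N) ℂ) (S : Finset (Fin N))
    (h : ∀ a b, A a b ≠ 0 → b ∈ S) : A.rank ≤ S.card := by
  classical
  rw [Matrix.rank, Matrix.range_mulVecLin]
  have hle : Submodule.span ℂ (Set.range Aᵀ) ≤
      Submodule.span ℂ (↑(S.image (fun j => Aᵀ j)) : Set (Fin N → ℂ)) := by
    rw [Submodule.span_le]
    rintro _ ⟨j, rfl⟩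
    by_cases hj : j ∈ S
    · apply Submodule.subset_span
      rw [Finset.coe_image]
      exact Set.mem_image_of_mem _ hj
    · have hz : Aᵀ j = 0 := by
        funext a
        by_contra hc
        exact hj (h a j hc)
      rw [hz]; exact Submodule.zero_mem _
  calc finrank ℂ (Submodule.span ℂ (Set.range Aᵀ))
      ≤ finrank ℂ (Submodule.span ℂ (↑(S.image (fun j => Aᵀ j)) : Set (Fin N → ℂ))) :=
        Submodule.finrank_mono hle
    _ ≤ (S.image (fun j => Aᵀ j)).card := finrank_span_finset_le_card _
    _ ≤ S.card := Finset.card_image_le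

lemma rank_le_card_rows {N : ℕ} (A : Matrix (Fin N) (Fin N) ℂ) (S : Finset (Fin N))
    (h : ∀ a b, A a b ≠ 0 → a ∈ S) : A.rank ≤ S.card := by
  rw [← Matrix.rank_transpose]
  exact rank_le_card_cols Aᵀ S (fun a b hab => h b a hab)

lemma matrix_rank_add_le {N : ℕ} (A B : Matrix (Fin N) (Fin N) ℂ) :
    (A + B).rank ≤ A.rank + B.rank := by
  rw [Matrix.rank, Matrix.rank, Matrix.rank]
  have hadd : (A + B).mulVecLin = A.mulVecLin + B.mulVecLin := by
    ext v
    simp [Matrix.add_mulVec]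
  rw [hadd]
  have hr : LinearMap.range (A.mulVecLin + B.mulVecLin) ≤
      LinearMap.range A.mulVecLin ⊔ LinearMap.range B.mulVecLin := by
    rintro x ⟨v, rfl⟩
    exact Submodule.mem_sup.2 ⟨_, ⟨v, rfl⟩, _, ⟨v, rfl⟩, rfl⟩
  exact le_trans (Submodule.finrank_mono hr)
    (Submodule.finrank_add_le_finrank_add_finrank _ _)

lemma rank_le_cover {N : ℕ} (A : Matrix (Fin N) (Fin N) ℂ) (R C : Finset (Fin N))
    (h : ∀ a b, A a b ≠ 0 → a ∈ R ∨ b ∈ C) : A.rank ≤ R.card + C.card := by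
  classical
  set B : Matrix (Fin N) (Fin N) ℂ := Matrix.of (fun a b => if a ∈ R then A a b else 0) with hB
  set D : Matrix (Fin N) (Fin N) ℂ := Matrix.of (fun a b => if a ∈ R then 0 else A a b) with hD
  have hAB : A = B + D := by
    ext a b
    by_cases ha : a ∈ R <;> simp [hB, hD, ha]
  have hrB : B.rank ≤ R.card := by
    apply rank_le_card_rows
    intro a b hab
    by_contra ha
    exact hab (by simp [hB, ha])
  have hrD : D.rank ≤ C.card := by
    apply rank_le_card_cols
    intro a b hab
    by_cases ha : a ∈ R
    · exact absurd (by simp [hD, ha]) hab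
    · have hA : A a b ≠ 0 := by simpa [hD, ha] using hab
      rcases h a b hA with h' | h'
      · exact absurd h' ha
      · exact h'
  calc A.rank = (B + D).rank := by rw [← hAB]
    _ ≤ B.rank + D.rank := matrix_rank_add_le B D
    _ ≤ R.card + C.card := Nat.add_le_add hrB hrD

lemma support_of_mem_ideal {n : ℕ} {I : Finset (ℕ × ℕ)}
    {x : Matrix (Fin (n + 1)) (Fin (n + 1)) ℂ} (hx : x ∈ idealSubmoduleM n I) :
    ∀ a b : Fin (n + 1), x a b ≠ 0 → ((a : ℕ) + 1, (b : ℕ) + 1) ∈ I := by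
  refine Submodule.span_induction
    (p := fun x _ => ∀ a b : Fin (n + 1), x a b ≠ 0 → ((a : ℕ) + 1, (b : ℕ) + 1) ∈ I)
    ?_ ?_ ?_ ?_ hx
  · rintro m ⟨p, hp, rfl⟩ a b hab
    simp only [Matrix.of_apply] at hab
    by_cases hc : (a : ℕ) + 1 = p.1 ∧ (b : ℕ) + 1 = p.2
    · have : ((a : ℕ) + 1, (b : ℕ) + 1) = p := Prod.ext hc.1 hc.2
      rw [this]; exact hp
    · exact absurd (if_neg hc) hab
  · intro a b hab
    exact absurd rfl hab
  · intro x y _ _ hx hy a b hab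
    by_cases hxa : x a b = 0
    · exact hy a b (fun h => hab (by simp [Matrix.add_apply, hxa, h]))
    · exact hx a b hxa
  · intro c x _ hx a b hab
    exact hx a b (fun h => hab (by simp [Matrix.smul_apply, h]))

/-- Let `I` be an upper order ideal, viewed as a ballot sequence/Dyck
path `b_1, …, b_{2(n+1)}` (via the boundary lattice path: `t_{ij} ∈ I` iff the
`i`-th zero of `b` occurs before the `j`-th one of `b`).  Then the number of parts
`ℓ` of the Gerstenhaber partition `λ_I` (the generic Jordan type of `I`) equals the
maximum height `max_t (#ones - #zeros)` of the associated path. -/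
theorem parts_eq_max_height (n ℓ : ℕ) (lam : ℕ → ℕ) (b : ℕ → Bool)
    (I : Finset (ℕ × ℕ))
    -- `b` is a ballot sequence of length `2(n+1)`:
    (hones : onesUpTo b (2 * (n + 1)) = n + 1)
    (hzeros : zerosUpTo b (2 * (n + 1)) = n + 1)
    (hballot : ∀ t ≤ 2 * (n + 1), zerosUpTo b t ≤ onesUpTo b t)
    -- `I` is the ideal whose boundary path is given by `b`:
    (hIb : ∀ p : ℕ × ℕ, p ∈ I ↔
      1 ≤ p.1 ∧ p.1 < p.2 ∧ p.2 ≤ n + 1 ∧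
      ∃ t ∈ Finset.Icc 1 (2 * (n + 1)), p.1 ≤ zerosUpTo b t ∧ onesUpTo b t < p.2)
    -- `λ` is the generic Jordan type of `I`, with `ℓ` parts:
    (hpos : ∀ i < ℓ, 0 < lam i) (hzero : ∀ i, ℓ ≤ i → lam i = 0)
    (hmono : ∀ i j : ℕ, i ≤ j → lam j ≤ lam i)
    (hsum : ∑ i ∈ Finset.range ℓ, lam i = n + 1)
    (hbound : ∀ x ∈ idealSubmoduleM n I, ∀ k : ℕ,
      (x ^ k).rank ≤ ∑ i ∈ Finset.range ℓ, (lam i - k))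
    (hattained : ∃ x ∈ idealSubmoduleM n I, ∀ k : ℕ,
      (x ^ k).rank = ∑ i ∈ Finset.range ℓ, (lam i - k)) :
    ℓ = (Finset.Icc 1 (2 * (n + 1))).sup (fun t => onesUpTo b t - zerosUpTo b t) := by
  classical
  set M : ℕ := (Finset.Icc 1 (2 * (n + 1))).sup (fun t => onesUpTo b t - zerosUpTo b t)
    with hMdef
  -- the maximum is attained at some `t*`
  have hne : (Finset.Icc 1 (2 * (n + 1))).Nonempty := ⟨1, Finset.mem_Icc.2 ⟨le_rfl, by omega⟩⟩
  obtain ⟨ts, htsmem, htsup⟩ :=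
    Finset.exists_mem_eq_sup (Finset.Icc 1 (2 * (n + 1))) hne
      (fun t => onesUpTo b t - zerosUpTo b t)
  rw [Finset.mem_Icc] at htsmem
  have hbal : zerosUpTo b ts ≤ onesUpTo b ts := hballot ts htsmem.2
  have hMts : M = onesUpTo b ts - zerosUpTo b ts := htsup
  have honests : onesUpTo b ts ≤ n + 1 := by
    rw [← hones]; exact onesUpTo_mono b htsmem.2
  -- the height is everywhere at most `M`
  have hAll : ∀ s ≤ 2 * (n + 1), onesUpTo b s ≤ zerosUpTo b s + M := by
    intro s hs
    rcases Nat.eq_zero_or_pos s with h0 | h1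
    · subst h0; rw [onesUpTo_zero, zerosUpTo_zero]; omega
    · have hle : onesUpTo b s - zerosUpTo b s ≤ M :=
        Finset.le_sup (f := fun t => onesUpTo b t - zerosUpTo b t)
          (Finset.mem_Icc.2 ⟨h1, hs⟩)
      have hb := hballot s hs
      omega
  have hM1 : 1 ≤ M := by
    have h1mem : (1 : ℕ) ∈ Finset.Icc 1 (2 * (n + 1)) := Finset.mem_Icc.2 ⟨le_rfl, by omega⟩
    have hle : onesUpTo b 1 - zerosUpTo b 1 ≤ M :=
      Finset.le_sup (f := fun t => onesUpTo b t - zerosUpTo b t) h1mem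
    have hsum1 := ones_add_zeros b 1
    have hb1 := hballot 1 (by omega)
    omega
  have hMn : M ≤ n + 1 := by omega
  -- the sum of `lam i - 1` equals `n + 1 - ℓ`
  have hS : (∑ i ∈ Finset.range ℓ, (lam i - 1)) + ℓ = n + 1 := by
    have h1 : ∀ i ∈ Finset.range ℓ, (lam i - 1) + 1 = lam i := fun i hi => by
      have := hpos i (Finset.mem_range.1 hi); omega
    calc (∑ i ∈ Finset.range ℓ, (lam i - 1)) + ℓ
        = ∑ i ∈ Finset.range ℓ, ((lam i - 1) + 1) := by
          rw [Finset.sum_add_distrib, Finset.sum_const, Finset.card_range, smul_eq_mul, mul_one]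
      _ = ∑ i ∈ Finset.range ℓ, lam i := Finset.sum_congr rfl h1
      _ = n + 1 := hsum
  have hlle : ℓ ≤ n + 1 := by omega
  -- UPPER BOUND: every element of the ideal has rank at most `n + 1 - M`
  have hub : ∀ x ∈ idealSubmoduleM n I, x.rank ≤ (n + 1) - M := by
    intro x hx
    set R : Finset (Fin (n + 1)) :=
      Finset.univ.filter (fun a => (a : ℕ) < zerosUpTo b ts) with hRdef
    set C : Finset (Fin (n + 1)) :=
      Finset.univ.filter (fun b' => onesUpTo b ts ≤ (b' : ℕ)) with hCdef
    have hcov : ∀ a b' : Fin (n + 1), x a b' ≠ 0 → a ∈ R ∨ b' ∈ C := by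
      intro a b' hab
      have hmem := (hIb _).1 (support_of_mem_ideal hx a b' hab)
      obtain ⟨-, -, -, t, htI, hzt, hot⟩ := hmem
      rw [Finset.mem_Icc] at htI
      by_cases ha : (a : ℕ) < zerosUpTo b ts
      · left; simp [hRdef, ha]
      · right
        simp only [hCdef, Finset.mem_filter, Finset.mem_univ, true_and]
        have h2 : ts ≤ t := by
          by_contra hc
          push_neg at hc
          have := zerosUpTo_mono b (le_of_lt hc)
          omega
        have h3 : onesUpTo b ts ≤ onesUpTo b t := onesUpTo_mono b h2
        omega
    have hR : R.card ≤ zerosUpTo b ts := by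
      calc R.card ≤ (Finset.range (zerosUpTo b ts)).card := by
            refine Finset.card_le_card_of_injOn (fun a => (a : ℕ)) ?_ ?_
            · intro a ha
              simp only [hRdef, Finset.coe_filter, Finset.mem_univ, true_and, Set.mem_setOf_eq] at ha
              simp [Finset.mem_range, ha]
            · intro a _ a' _ h
              exact Fin.ext h
        _ = zerosUpTo b ts := Finset.card_range _
    have hC : C.card ≤ (n + 1) - onesUpTo b ts := by
      calc C.card ≤ (Finset.range ((n + 1) - onesUpTo b ts)).card := by
            refine Finset.card_le_card_of_injOn (fun b' => (b' : ℕ) - onesUpTo b ts) ?_ ?_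
            · intro b' hb'
              simp only [hCdef, Finset.coe_filter, Finset.mem_univ, true_and, Set.mem_setOf_eq] at hb'
              have := b'.isLt
              simp only [Finset.mem_coe, Finset.mem_range]
              omega
            · intro a ha a' ha' h
              simp only [hCdef, Finset.coe_filter, Set.mem_setOf_eq] at ha ha'
              have h' : (a : ℕ) - onesUpTo b ts = (a' : ℕ) - onesUpTo b ts := h
              exact Fin.ext (by omega)
        _ = (n + 1) - onesUpTo b ts := Finset.card_range _
    have hcover := rank_le_cover x R C hcov
    omega
  -- LOWER BOUND MATRIX: the `M`-th superdiagonal partial permutation matrix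
  set x0 : Matrix (Fin (n + 1)) (Fin (n + 1)) ℂ :=
    Matrix.of (fun a b' => if (b' : ℕ) = (a : ℕ) + M then 1 else 0) with hx0def
  -- membership of the needed positions in `I`
  have hposmem : ∀ a : ℕ, a < n + 1 - M → (a + 1, a + 1 + M) ∈ I := by
    intro a ha
    rw [hIb]
    obtain ⟨t, ht1, ht2, hzt, hzt', hot⟩ :=
      exists_ith_zero b hzeros (i := a + 1) (by omega) (by omega)
    refine ⟨by omega, by omega, by omega, t, Finset.mem_Icc.2 ⟨ht1, ht2⟩, by omega, ?_⟩
    have := hAll (t - 1) (by omega)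
    omega
  have hx0mem : x0 ∈ idealSubmoduleM n I := by
    have hx0eq : x0 = ∑ a ∈ Finset.range (n + 1 - M),
        Matrix.of (fun a' b' : Fin (n + 1) =>
          if (a' : ℕ) + 1 = a + 1 ∧ (b' : ℕ) + 1 = (a + 1) + M then (1 : ℂ) else 0) := by
      ext a' b'
      rw [Matrix.sum_apply]
      simp only [Matrix.of_apply, hx0def]
      by_cases hb : (b' : ℕ) = (a' : ℕ) + M
      · have hb'lt := b'.isLt
        have ha'mem : (a' : ℕ) ∈ Finset.range (n + 1 - M) := by
          simp only [Finset.mem_range]; omega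
        rw [if_pos hb, Finset.sum_eq_single ((a' : ℕ))]
        · rw [if_pos ⟨rfl, by omega⟩]
        · intro c _ hca
          rw [if_neg]
          rintro ⟨h1, _⟩
          exact hca (by omega)
        · intro hnot; exact absurd ha'mem hnot
      · rw [if_neg hb]
        symm
        apply Finset.sum_eq_zero
        intro c _
        rw [if_neg]
        rintro ⟨h1, h2⟩
        exact hb (by omega)
    rw [hx0eq]
    apply Submodule.sum_mem
    intro a ha
    apply Submodule.subset_span
    exact ⟨(a + 1, a + 1 + M), hposmem a (Finset.mem_range.1 ha), rfl⟩
  -- rank lower bound for `x0`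
  have hMle : n + 1 - M ≤ n + 1 := by omega
  have hx0rank : (n + 1) - M ≤ x0.rank := by
    set v : Fin (n + 1 - M) → (Fin (n + 1) → ℂ) :=
      fun a => Pi.single (Fin.castLE hMle a) 1 with hvdef
    have hli : LinearIndependent ℂ v := by
      have hb := (Pi.basisFun ℂ (Fin (n + 1))).linearIndependent
      have hcomp := hb.comp (Fin.castLE hMle) (Fin.castLE_injective hMle)
      have heq : (⇑(Pi.basisFun ℂ (Fin (n + 1))) ∘ Fin.castLE hMle) = v := by
        funext a
        simp [hvdef, Function.comp, Pi.basisFun_apply]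
      rwa [heq] at hcomp
    have hsub : Submodule.span ℂ (Set.range v) ≤ LinearMap.range x0.mulVecLin := by
      rw [Submodule.span_le]
      rintro _ ⟨a, rfl⟩
      have haM : (a : ℕ) + M < n + 1 := by
        have := a.isLt; omega
      refine ⟨Pi.single (⟨(a : ℕ) + M, haM⟩ : Fin (n + 1)) 1, ?_⟩
      rw [Matrix.mulVecLin_apply, Matrix.mulVec_single_one]
      funext i
      simp only [hvdef, Matrix.transpose_apply, Matrix.col_apply, hx0def, Matrix.of_apply]
      by_cases hi : (i : ℕ) = (a : ℕ)
      · rw [if_pos (by omega)]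
        have : i = Fin.castLE hMle a := Fin.ext (by simpa using hi)
        rw [this, Pi.single_eq_same]
      · rw [if_neg (by omega)]
        rw [Pi.single_eq_of_ne (fun hc => hi (by simpa using congrArg Fin.val hc))]
    have hfr : finrank ℂ (Submodule.span ℂ (Set.range v)) = n + 1 - M := by
      rw [finrank_span_eq_card hli, Fintype.card_fin]
    calc (n + 1) - M = finrank ℂ (Submodule.span ℂ (Set.range v)) := hfr.symm
      _ ≤ finrank ℂ (LinearMap.range x0.mulVecLin) := Submodule.finrank_mono hsub
      _ = x0.rank := rfl
  -- assemble
  obtain ⟨x1, hx1mem, hx1⟩ := hattained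
  have h1 := hx1 1
  rw [pow_one] at h1
  have h2 := hub x1 hx1mem
  have h3 := hbound x0 hx0mem 1
  rw [pow_one] at h3
  omega
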